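/- Let E be a real inner product space, let Q : E → E be an orthogonal projection (a linear map with Q ∘ Q = Q and ⟪Q x, y⟫ = ⟪x, Q y⟫ for all x, y), and let u, z ∈ E with z ≠ 0. Then the function α ↦ (‖Q(u + α • z)‖² − 2⟪Q u, u + α • z⟫·exp(−α²‖z‖²/2) + ‖Q u‖²) / (2·(1 − exp(−α²‖z‖²/2))) tends to ‖Q u‖² + ‖Q z‖²/‖z‖² as α → 0 with α ≠ 0. -/
import Mathlib


open Filter Topology RealInnerProductSpace

/-- For an orthogonal projection `Q` on a real inner product space `E`
and `u z : E` with `z ≠ 0`, the function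
`α ↦ (‖Q(u + α•z)‖² − 2⟪Q u, u + α•z⟫·exp(−α²‖z‖²/2) + ‖Q u‖²) / (2·(1 − exp(−α²‖z‖²/2)))`
tends to `‖Q u‖² + ‖Q z‖²/‖z‖²` as `α → 0`, `α ≠ 0`. -/
theorem stmt0 {E : Type*} [NormedAddCommGroup E] [InnerProductSpace ℝ E]
    (Q : E →ₗ[ℝ] E) (hQidem : ∀ x, Q (Q x) = Q x)
    (hQsym : ∀ x y : E, ⟪Q x, y⟫ = ⟪x, Q y⟫)
    (u z : E) (hz : z ≠ 0) :
    Tendsto (fun α : ℝ =>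
        (‖Q (u + α • z)‖ ^ 2
          - 2 * ⟪Q u, u + α • z⟫ * Real.exp (-(α ^ 2 * ‖z‖ ^ 2) / 2)
          + ‖Q u‖ ^ 2)
        / (2 * (1 - Real.exp (-(α ^ 2 * ‖z‖ ^ 2) / 2))))
      (𝓝[≠] (0 : ℝ))
      (𝓝 (‖Q u‖ ^ 2 + ‖Q z‖ ^ 2 / ‖z‖ ^ 2)) := by
  have hzn : (0:ℝ) < ‖z‖ := norm_pos_iff.mpr hz
  have hzn2 : (0:ℝ) < ‖z‖ ^ 2 := by positivity
  set c : ℝ := ⟪Q u, Q z⟫ with hc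
  set A : ℝ := ‖Q u‖ ^ 2
  set B : ℝ := ‖Q z‖ ^ 2
  -- s(α) := -(α^2 ‖z‖^2)/2
  set s : ℝ → ℝ := fun α => -(α ^ 2 * ‖z‖ ^ 2) / 2 with hs
  -- slope limit : (exp x - 1)/(x - 0) → exp 0 = 1 on punctured nbhd
  have hslope : Tendsto (fun x : ℝ => (Real.exp x - 1) / x) (𝓝[≠] 0) (𝓝 1) := by
    have h := hasDerivAt_iff_tendsto_slope.mp (Real.hasDerivAt_exp 0)
    rw [Real.exp_zero] at h
    refine h.congr (fun x => ?_)
    simp [slope, Real.exp_zero, div_eq_inv_mul]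
  have hsmap : Tendsto s (𝓝[≠] 0) (𝓝[≠] (0:ℝ)) := by
    rw [tendsto_nhdsWithin_iff]
    constructor
    · have : Tendsto s (𝓝 0) (𝓝 (-(0 ^ 2 * ‖z‖ ^ 2) / 2)) := by
        apply Continuous.tendsto
        continuity
      simpa using this.mono_left nhdsWithin_le_nhds
    · filter_upwards [self_mem_nhdsWithin] with α hα
      have hα0 : α ≠ 0 := hα
      simp only [hs, Set.mem_compl_iff, Set.mem_singleton_iff]
      intro h
      apply hα0
      have : α ^ 2 * ‖z‖ ^ 2 = 0 := by linarith [neg_div (2:ℝ) (α ^ 2 * ‖z‖ ^ 2), h]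
      rcases mul_eq_zero.mp this with h1 | h1
      · exact pow_eq_zero_iff (by norm_num) |>.mp h1
      · exact absurd h1 (ne_of_gt hzn2)
  -- (exp (s α) - 1)/(s α) → 1, hence s α / (exp (s α) - 1) → 1
  have h1 : Tendsto (fun α => (Real.exp (s α) - 1) / s α) (𝓝[≠] 0) (𝓝 1) :=
    hslope.comp hsmap
  have h2 : Tendsto (fun α => s α / (Real.exp (s α) - 1)) (𝓝[≠] 0) (𝓝 1) := by
    have := (h1.inv₀ one_ne_zero)
    simpa [one_div] using this.congr (fun α => by rw [inv_div])
  -- main convergence of the simplified expression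
  have hmain : Tendsto (fun α : ℝ =>
      A + α * c + B * ((1 / ‖z‖ ^ 2) * (s α / (Real.exp (s α) - 1))))
      (𝓝[≠] 0) (𝓝 (A + B / ‖z‖ ^ 2)) := by
    have hlin : Tendsto (fun α : ℝ => A + α * c) (𝓝[≠] 0) (𝓝 A) := by
      have : Tendsto (fun α : ℝ => A + α * c) (𝓝 0) (𝓝 (A + 0 * c)) := by
        apply Continuous.tendsto; continuity
      simpa using this.mono_left nhdsWithin_le_nhds
    have h3 : Tendsto (fun α : ℝ => B * ((1 / ‖z‖ ^ 2) * (s α / (Real.exp (s α) - 1))))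
        (𝓝[≠] 0) (𝓝 (B * ((1 / ‖z‖ ^ 2) * 1))) :=
      (tendsto_const_nhds.mul (tendsto_const_nhds.mul h2))
    have := hlin.add h3
    simpa [mul_one, mul_one_div, div_eq_mul_inv, mul_comm] using this
  refine hmain.congr' ?_
  filter_upwards [self_mem_nhdsWithin] with α hα
  have hα0 : α ≠ 0 := hα
  have hsneg : s α < 0 := by
    have : 0 < α ^ 2 * ‖z‖ ^ 2 := by positivity
    simp only [hs]; linarith
  have he1 : Real.exp (s α) < 1 := Real.exp_lt_one_iff.mpr hsneg
  have hne : 1 - Real.exp (s α) ≠ 0 := by linarith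
  have hne' : Real.exp (s α) - 1 ≠ 0 := by linarith
  -- inner product identities
  have huu : ⟪Q u, u⟫ = A := by
    rw [← hQidem u, hQsym, real_inner_self_eq_norm_sq]
  have huz : ⟪Q u, z⟫ = c := by
    rw [← hQidem u, hQsym]
  have hexpand : ‖Q (u + α • z)‖ ^ 2 = A + 2 * α * c + α ^ 2 * B := by
    rw [map_add, map_smul]
    rw [norm_add_sq_real, real_inner_smul_right, norm_smul]
    simp only [Real.norm_eq_abs, mul_pow, sq_abs]
    ring
  have hinner : ⟪Q u, u + α • z⟫ = A + α * c := by
    rw [inner_add_right, real_inner_smul_right, huu, huz]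
  show A + α * c + B * ((1 / ‖z‖ ^ 2) * (s α / (Real.exp (s α) - 1))) = _
  rw [hexpand, hinner]
  have hse : (-(α ^ 2 * ‖z‖ ^ 2) / 2) = s α := rfl
  rw [hse]
  field_simp
  ring
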